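/- The map (𝒢, γ) ↦ (G, g) with G = √(Λ² - 𝒢²) cos γ and g = -arctan((Λ/𝒢)√(1 - 𝒢²/Λ²) sin γ), defined for 0 < 𝒢 < Λ, is canonical: dG ∧ dg = d𝒢 ∧ dγ (i.e., the Jacobian determinant ∂(G,g)/∂(𝒢,γ) equals 1). -/

import Mathlib

theorem stmt_9 (Λ : ℝ) (hΛ : 0 < Λ) (𝒢 γ : ℝ) (h𝒢0 : 0 < 𝒢) (h𝒢Λ : 𝒢 < Λ) :
    deriv (fun s : ℝ => Real.sqrt (Λ^2 - s^2) * Real.cos γ) 𝒢 *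
      deriv (fun c : ℝ => - Real.arctan ((Λ / 𝒢) * Real.sqrt (1 - 𝒢^2 / Λ^2) * Real.sin c)) γ
    - deriv (fun c : ℝ => Real.sqrt (Λ^2 - 𝒢^2) * Real.cos c) γ *
      deriv (fun s : ℝ => - Real.arctan ((Λ / s) * Real.sqrt (1 - s^2 / Λ^2) * Real.sin γ)) 𝒢
    = 1 := by
  set A : ℝ := Real.sqrt (Λ^2 - 𝒢^2) with hAdef
  have hpos : (0:ℝ) < Λ^2 - 𝒢^2 := by nlinarith
  have hA : 0 < A := Real.sqrt_pos.mpr hpos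
  have hA2 : A^2 = Λ^2 - 𝒢^2 := Real.sq_sqrt hpos.le
  have hs1 : Real.sqrt (1 - 𝒢^2 / Λ^2) = A / Λ := by
    rw [show 1 - 𝒢^2 / Λ^2 = (A / Λ)^2 by
      field_simp
      nlinarith [hA2]]
    exact Real.sqrt_sq (by positivity)
  -- derivative 1
  have hd1 : HasDerivAt (fun s : ℝ => Real.sqrt (Λ^2 - s^2) * Real.cos γ)
      ((-(2*𝒢)) / (2*A) * Real.cos γ) 𝒢 := by
    have hinner : HasDerivAt (fun s : ℝ => Λ^2 - s^2) (-(2*𝒢)) 𝒢 := by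
      have := (hasDerivAt_pow 2 𝒢).const_sub (Λ^2)
      simpa using this
    have := (Real.hasDerivAt_sqrt (ne_of_gt hpos)).comp 𝒢 hinner
    have h2 := this.mul_const (Real.cos γ)
    refine h2.congr_deriv ?_
    field_simp
    rw [hAdef]; ring
  -- derivative 2
  have hd2 : HasDerivAt (fun c : ℝ => - Real.arctan ((Λ / 𝒢) * Real.sqrt (1 - 𝒢^2 / Λ^2) * Real.sin c))
      (-(1 / (1 + ((A/𝒢) * Real.sin γ)^2) * ((A/𝒢) * Real.cos γ))) γ := by
    have hk : (Λ / 𝒢) * Real.sqrt (1 - 𝒢^2 / Λ^2) = A / 𝒢 := by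
      rw [hs1]; field_simp
    have hinner : HasDerivAt (fun c : ℝ => (Λ / 𝒢) * Real.sqrt (1 - 𝒢^2 / Λ^2) * Real.sin c)
        ((A/𝒢) * Real.cos γ) γ := by
      have h := (Real.hasDerivAt_sin γ).const_mul ((Λ / 𝒢) * Real.sqrt (1 - 𝒢^2 / Λ^2))
      refine h.congr_deriv ?_
      rw [hk]
    have := ((Real.hasDerivAt_arctan _).comp γ hinner).neg
    refine this.congr_deriv ?_
    rw [hk]
  -- derivative 3
  have hd3 : HasDerivAt (fun c : ℝ => Real.sqrt (Λ^2 - 𝒢^2) * Real.cos c) (A * (-Real.sin γ)) γ := by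
    have := (Real.hasDerivAt_cos γ).const_mul A
    simpa [hAdef, mul_comm] using this
  -- derivative 4
  have hu' : HasDerivAt (fun s : ℝ => (Λ / s) * Real.sqrt (1 - s^2 / Λ^2) * Real.sin γ)
      (((-Λ/𝒢^2) * (A/Λ) + (Λ/𝒢) * ((-(2*𝒢/Λ^2)) / (2*(A/Λ)))) * Real.sin γ) 𝒢 := by
    have h1 : HasDerivAt (fun s : ℝ => Λ / s) (-Λ/𝒢^2) 𝒢 := by
      have h := (hasDerivAt_const 𝒢 Λ).div (hasDerivAt_id 𝒢) (ne_of_gt h𝒢0)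
      refine h.congr_deriv ?_
      simp
    have hinner : HasDerivAt (fun s : ℝ => 1 - s^2 / Λ^2) (-(2*𝒢/Λ^2)) 𝒢 := by
      have := ((hasDerivAt_pow 2 𝒢).div_const (Λ^2)).const_sub 1
      refine this.congr_deriv ?_
      ring
    have hne : (1 - 𝒢^2 / Λ^2) ≠ 0 := by
      rw [show (1 : ℝ) - 𝒢^2 / Λ^2 = (Λ^2 - 𝒢^2)/Λ^2 by field_simp]
      positivity
    have h2 : HasDerivAt (fun s : ℝ => Real.sqrt (1 - s^2 / Λ^2))
        ((-(2*𝒢/Λ^2)) / (2*(A/Λ))) 𝒢 := by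
      have := (Real.hasDerivAt_sqrt hne).comp 𝒢 hinner
      refine this.congr_deriv ?_
      rw [hs1]
      field_simp
    have h3 := h1.mul h2
    have h4 := h3.mul_const (Real.sin γ)
    refine h4.congr_deriv ?_
    rw [hs1]
  have hd4 : HasDerivAt (fun s : ℝ => - Real.arctan ((Λ / s) * Real.sqrt (1 - s^2 / Λ^2) * Real.sin γ))
      (-(1 / (1 + ((A/𝒢) * Real.sin γ)^2) *
        (((-Λ/𝒢^2) * (A/Λ) + (Λ/𝒢) * ((-(2*𝒢/Λ^2)) / (2*(A/Λ)))) * Real.sin γ))) 𝒢 := by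
    have harg : (Λ / 𝒢) * Real.sqrt (1 - 𝒢^2 / Λ^2) * Real.sin γ = (A/𝒢) * Real.sin γ := by
      rw [hs1]; field_simp
    have := ((Real.hasDerivAt_arctan ((Λ / 𝒢) * Real.sqrt (1 - 𝒢^2 / Λ^2) * Real.sin γ)).comp 𝒢 hu').neg
    rw [harg] at this
    exact this
  rw [hd1.deriv, hd2.deriv, hd3.deriv, hd4.deriv]
  have hsc : Real.sin γ ^ 2 + Real.cos γ ^ 2 = 1 := Real.sin_sq_add_cos_sq γ
  have hD : 1 + ((A/𝒢) * Real.sin γ)^2 = (𝒢^2 + (Λ^2 - 𝒢^2) * Real.sin γ^2) / 𝒢^2 := by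
    field_simp
    nlinarith [hA2]
  have hDpos : (0:ℝ) < 𝒢^2 + (Λ^2 - 𝒢^2) * Real.sin γ^2 := by positivity
  rw [hD]
  field_simp
  linear_combination Real.sin γ^2 * hA2 + 𝒢^2 * hsc
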